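/- Let ℓ, r, m be natural numbers with ℓ ≤ r ≤ m and m ≥ 1. Then binom(m-ℓ, ≤ r-ℓ) ≤ (r/m)^ℓ · binom(m, ≤ r). -/

import Mathlib

open Finset

abbrev Cube (m : ℕ) := Fin m → ZMod 2
abbrev BF (m : ℕ) := Cube m → ZMod 2

/-- Codewords of RM(m,r): functions computed by a polynomial of total degree ≤ r. -/
def RM (m r : ℕ) : Set (BF m) :=
  {f | ∃ p : MvPolynomial (Fin m) (ZMod 2), p.totalDegree ≤ r ∧
    ∀ x, MvPolynomial.eval x p = f x}

/-- Normalized weight of a Boolean function. -/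
noncomputable def wt {m : ℕ} (f : BF m) : ℝ :=
  ((univ.filter fun x => f x = 1).card : ℝ) / 2 ^ m

/-- Bias of a Boolean function. -/
noncomputable def bias {m : ℕ} (f : BF m) : ℝ :=
  (∑ x : Cube m, if f x = 0 then (1 : ℝ) else -1) / 2 ^ m

/-- Number of codewords of RM(m,r) of weight at most β. -/
noncomputable def W (m r : ℕ) (β : ℝ) : ℕ :=
  Set.ncard {f : BF m | f ∈ RM m r ∧ wt f ≤ β}

/-- binom(n, ≤ k) = ∑_{i=0}^k C(n,i). -/
def binomLe (n k : ℕ) : ℕ := ∑ i ∈ Finset.range (k + 1), n.choose i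

lemma key (r m : ℕ) (hr : 1 ≤ r) (hrm : r ≤ m) :
    m * binomLe (m - 1) (r - 1) ≤ r * binomLe m r := by
  have hm : 1 ≤ m := hr.trans hrm
  have h1 : m * binomLe (m - 1) (r - 1) = ∑ j ∈ Finset.range r, (j + 1) * m.choose (j + 1) := by
    rw [binomLe, Nat.sub_add_cancel hr, Finset.mul_sum]
    refine Finset.sum_congr rfl fun j _ => ?_
    have := Nat.add_one_mul_choose_eq (m - 1) j
    rw [Nat.sub_add_cancel hm] at this
    rw [this]; ring
  rw [h1]
  calc ∑ j ∈ Finset.range r, (j + 1) * m.choose (j + 1)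
      ≤ ∑ j ∈ Finset.range r, r * m.choose (j + 1) := by
        refine Finset.sum_le_sum fun j hj => Nat.mul_le_mul_right _ ?_
        exact Finset.mem_range.mp hj
    _ = r * ∑ j ∈ Finset.range r, m.choose (j + 1) := by rw [Finset.mul_sum]
    _ ≤ r * binomLe m r := by
        refine Nat.mul_le_mul_left _ ?_
        rw [binomLe, Finset.sum_range_succ']
        exact Nat.le_add_right _ _


/-- binom(m-ℓ, ≤ r-ℓ) ≤ (r/m)^ℓ · binom(m, ≤ r)
(Lemma `(Simple Combinatorial Bound I)`). -/
theorem binomLe_upper_bound (ℓ r m : ℕ) (hℓr : ℓ ≤ r) (hrm : r ≤ m)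
    (hm : 1 ≤ m) :
    (binomLe (m - ℓ) (r - ℓ) : ℝ) ≤ ((r : ℝ) / m) ^ ℓ * (binomLe m r : ℝ) := by
  have hm0 : (0:ℝ) < m := by exact_mod_cast hm
  induction ℓ with
  | zero => simp
  | succ n ih =>
    have hn : n ≤ r := le_of_lt hℓr
    have ih' := ih hn
    have hrn : 1 ≤ r - n := by omega
    have hmn : r - n ≤ m - n := Nat.sub_le_sub_right hrm n
    have hk := key (r - n) (m - n) hrn hmn
    have hmn1 : (0:ℝ) < ((m - n : ℕ) : ℝ) := by exact_mod_cast hrn.trans hmn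
    have e1 : m - (n + 1) = (m - n) - 1 := by omega
    have e2 : r - (n + 1) = (r - n) - 1 := by omega
    rw [e1, e2]
    have hk' : (binomLe ((m - n) - 1) ((r - n) - 1) : ℝ)
        ≤ ((r - n : ℕ) : ℝ) / ((m - n : ℕ) : ℝ) * (binomLe (m - n) (r - n) : ℝ) := by
      rw [div_mul_eq_mul_div, le_div_iff₀ hmn1, mul_comm]
      exact_mod_cast hk
    have hratio : ((r - n : ℕ) : ℝ) / ((m - n : ℕ) : ℝ) ≤ (r : ℝ) / m := by
      rw [div_le_div_iff₀ hmn1 hm0, Nat.cast_sub hn, Nat.cast_sub (hn.trans hrm)]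
      have h1 : (r:ℝ) ≤ m := by exact_mod_cast hrm
      have h2 : (0:ℝ) ≤ n := Nat.cast_nonneg n
      nlinarith
    have hb : (0:ℝ) ≤ (binomLe (m - n) (r - n) : ℝ) := Nat.cast_nonneg _
    calc (binomLe ((m - n) - 1) ((r - n) - 1) : ℝ)
        ≤ ((r - n : ℕ) : ℝ) / ((m - n : ℕ) : ℝ) * (binomLe (m - n) (r - n) : ℝ) := hk'
      _ ≤ ((r : ℝ) / m) * (binomLe (m - n) (r - n) : ℝ) := by
          exact mul_le_mul_of_nonneg_right hratio hb
      _ ≤ ((r : ℝ) / m) * (((r : ℝ) / m) ^ n * (binomLe m r : ℝ)) := by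
          refine mul_le_mul_of_nonneg_left ih' ?_
          positivity
      _ = ((r : ℝ) / m) ^ (n + 1) * (binomLe m r : ℝ) := by ring
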